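/- Let U, V ⊆ ℝ^d be two finite non-empty sets. Then there exists a max-linear function f ∈ L_d with f(x) < 0 for all x ∈ U and f(x) > 0 for all x ∈ V if and only if conv(U) ∩ V = ∅, where conv(U) denotes the convex hull of U. -/

import Mathlib

open Matrix BigOperators

/-- A max-linear (max-affine) function: pointwise maximum of finitely many affine functions. -/
def IsMaxAffine {d : ℕ} (f : (Fin d → ℝ) → ℝ) : Prop :=
  ∃ (P : Finset ((Fin d → ℝ) × ℝ)) (hP : P.Nonempty),
    ∀ x, f x = P.sup' hP fun wb => wb.1 ⬝ᵥ x + wb.2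

lemma dot_single_eq {d : ℕ} (g : (Fin d → ℝ) →L[ℝ] ℝ) (x : Fin d → ℝ) :
    (fun i => g (Pi.single i 1)) ⬝ᵥ x = g x := by
  conv_rhs => rw [pi_eq_sum_univ x, map_sum]
  simp only [dotProduct]
  refine Finset.sum_congr rfl fun i _ => ?_
  rw [_root_.map_smul, smul_eq_mul, mul_comm]
  congr 2
  ext j
  simp [Pi.single_apply, eq_comm]

/-- `U` is max-lin separable from `V` iff `conv(U) ∩ V = ∅`. -/
theorem maxLin_separable_iff {d : ℕ} (U V : Finset (Fin d → ℝ))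
    (hU : U.Nonempty) (hV : V.Nonempty) :
    (∃ f, IsMaxAffine f ∧ (∀ x ∈ U, f x < 0) ∧ ∀ x ∈ V, 0 < f x) ↔
      convexHull ℝ (U : Set (Fin d → ℝ)) ∩ (V : Set (Fin d → ℝ)) = ∅ := by
  constructor
  · rintro ⟨f, ⟨P, hP, hf⟩, hfU, hfV⟩
    rw [Set.eq_empty_iff_forall_notMem]
    rintro x ⟨hxU, hxV⟩
    have hx0 : 0 < f x := hfV x hxV
    obtain ⟨wb, hwbP, hwb⟩ := Finset.exists_mem_eq_sup' hP (fun wb => wb.1 ⬝ᵥ x + wb.2)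
    have hlin : IsLinearMap ℝ (fun y : Fin d → ℝ => wb.1 ⬝ᵥ y) :=
      ⟨fun a b => dotProduct_add _ _ _, fun c a => by
        simp [dotProduct, Finset.mul_sum, mul_assoc, mul_left_comm]⟩
    have hconv : Convex ℝ {y : Fin d → ℝ | wb.1 ⬝ᵥ y < -wb.2} :=
      convex_halfSpace_lt hlin (-wb.2)
    have hUsub : (U : Set (Fin d → ℝ)) ⊆ {y : Fin d → ℝ | wb.1 ⬝ᵥ y < -wb.2} := by
      intro u hu
      have h1 := hfU u hu
      have hle : wb.1 ⬝ᵥ u + wb.2 ≤ f u := by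
        rw [hf u]; exact Finset.le_sup' (fun wb => wb.1 ⬝ᵥ u + wb.2) hwbP
      simp only [Set.mem_setOf_eq]
      linarith
    have hxlt := convexHull_min hUsub hconv hxU
    simp only [Set.mem_setOf_eq] at hxlt
    rw [hf x, hwb] at hx0
    linarith
  · intro hsep
    have hclosed : IsClosed (convexHull ℝ (U : Set (Fin d → ℝ))) :=
      (U.finite_toSet.isCompact_convexHull ℝ).isClosed
    have hcvx := convex_convexHull ℝ (U : Set (Fin d → ℝ))
    have key : ∀ v ∈ V, ∃ (w : Fin d → ℝ) (c : ℝ),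
        (∀ u ∈ convexHull ℝ (U : Set (Fin d → ℝ)), w ⬝ᵥ u < c) ∧ c < w ⬝ᵥ v := by
      intro v hv
      have hvnot : v ∉ convexHull ℝ (U : Set (Fin d → ℝ)) := by
        intro h
        rw [Set.eq_empty_iff_forall_notMem] at hsep
        exact hsep v ⟨h, hv⟩
      obtain ⟨g, c, hgc, hcv⟩ := geometric_hahn_banach_closed_point hcvx hclosed hvnot
      exact ⟨fun i => g (Pi.single i 1), c,
        fun u hu => by rw [dot_single_eq]; exact hgc u hu,
        by rw [dot_single_eq]; exact hcv⟩
    choose w c hwc hcv using key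
    have hAne : V.attach.Nonempty := Finset.attach_nonempty_iff.mpr hV
    set P : Finset ((Fin d → ℝ) × ℝ) :=
      V.attach.image (fun v => (w v.1 v.2, -(c v.1 v.2))) with hPdef
    have hPne : P.Nonempty := hAne.image _
    refine ⟨fun x => P.sup' hPne (fun wb => wb.1 ⬝ᵥ x + wb.2), ⟨P, hPne, fun x => rfl⟩, ?_, ?_⟩
    · intro u hu
      rw [Finset.sup'_lt_iff]
      rintro wb hwb
      simp only [hPdef, Finset.mem_image, Finset.mem_attach, true_and] at hwb
      obtain ⟨v, rfl⟩ := hwb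
      have := hwc v.1 v.2 u (subset_convexHull ℝ _ hu)
      simp only []
      linarith
    · intro v hv
      have hmem : (w v hv, -(c v hv)) ∈ P := by
        rw [hPdef]
        exact Finset.mem_image.mpr ⟨⟨v, hv⟩, Finset.mem_attach _ _, rfl⟩
      have hle : w v hv ⬝ᵥ v + -(c v hv) ≤
          P.sup' hPne (fun wb => wb.1 ⬝ᵥ v + wb.2) := Finset.le_sup' (fun wb => wb.1 ⬝ᵥ v + wb.2) hmem
      have := hcv v hv
      linarith
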